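/- Let a > 0, b > 0, ζ > 0, μ ≥ 0. Then for all real s > (2μ)^{1/a} the Laplace transform identity ∫_0^∞ e^{-st} t^{b-1} E_{a,b}^{ζ}(-μ t^a) dt = s^{aζ - b} / (s^a + μ)^ζ holds, provided the integral converges absolutely; in particular it holds with ζ = n+1 a positive integer. -/

import Mathlib

open MeasureTheory Real Set Filter Topology

lemma aux_integrableOn (c r : ℝ) (hc : 0 < c) (hr : 0 < r) :
    IntegrableOn (fun t : ℝ => t ^ (c - 1) * Real.exp (-(r * t))) (Set.Ioi 0) := by
  have h := integrableOn_rpow_mul_exp_neg_mul_rpow (p := 1) (s := c - 1) (b := r)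
    (by linarith) one_pos hr
  refine h.congr_fun (fun t ht => ?_) measurableSet_Ioi
  simp only [Real.rpow_one]
  ring_nf

lemma aux_gamma_succ (ζ : ℝ) (hζ : 0 < ζ) (k : ℕ) :
    Real.Gamma (ζ + (k + 1 : ℕ)) = (ζ + k) * Real.Gamma (ζ + k) := by
  have hk : (0:ℝ) ≤ k := Nat.cast_nonneg k
  have : ζ + ((k:ℕ) + 1 : ℕ) = (ζ + k) + 1 := by push_cast; ring
  rw [this, Real.Gamma_add_one (by linarith)]

lemma aux_gamma_pos (ζ : ℝ) (hζ : 0 < ζ) (k : ℕ) : 0 < Real.Gamma (ζ + k) :=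
  Real.Gamma_pos_of_pos (by have : (0:ℝ) ≤ k := Nat.cast_nonneg k; linarith)

lemma aux_summable (ζ : ℝ) (hζ : 0 < ζ) {x : ℝ} (hx0 : 0 ≤ x) (hx1 : x < 1) :
    Summable (fun k : ℕ => Real.Gamma (ζ + k) * x ^ k / (k.factorial : ℝ)) := by
  rcases eq_or_lt_of_le hx0 with h0 | hxpos
  · refine summable_of_ne_finset_zero (s := {0}) (fun k hk => ?_)
    have hk0 : k ≠ 0 := by simpa using hk
    rw [← h0, zero_pow hk0, mul_zero, zero_div]
  · set f : ℕ → ℝ := fun k => Real.Gamma (ζ + k) * x ^ k / (k.factorial : ℝ) with hf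
    have hfpos : ∀ k, 0 < f k := fun k => by
      have := aux_gamma_pos ζ hζ k
      have := Nat.cast_pos (α := ℝ) |>.mpr (Nat.factorial_pos k)
      positivity
    refine summable_of_ratio_test_tendsto_lt_one hx1
      (Filter.Eventually.of_forall fun k => (hfpos k).ne') ?_
    have key : ∀ k : ℕ, ‖f (k + 1)‖ / ‖f k‖ = x + (ζ - 1) * x * (1 / ((k:ℝ) + 1)) := by
      intro k
      have h1 := aux_gamma_pos ζ hζ k
      have hfac : (0:ℝ) < (k.factorial : ℝ) := Nat.cast_pos.mpr (Nat.factorial_pos k)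
      rw [Real.norm_eq_abs, Real.norm_eq_abs, abs_of_pos (hfpos _), abs_of_pos (hfpos _)]
      show Real.Gamma (ζ + ((k:ℕ)+1:ℕ)) * x ^ (k+1) / ((k+1).factorial : ℝ) / f k = _
      rw [aux_gamma_succ ζ hζ k, Nat.factorial_succ, hf]
      push_cast
      field_simp
      ring
    rw [show (𝓝 x) = 𝓝 (x + (ζ - 1) * x * 0) by rw [mul_zero, add_zero]]
    simp only [key]
    exact tendsto_const_nhds.add
      (tendsto_const_nhds.mul tendsto_one_div_add_atTop_nhds_zero_nat)

lemma aux_exp_tsum (y : ℝ) : ∑' k : ℕ, y ^ k / (k.factorial : ℝ) = Real.exp y := by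
  rw [Real.exp_eq_exp_ℝ, NormedSpace.exp_eq_tsum_div]

lemma aux_binomial (ζ : ℝ) (hζ : 0 < ζ) {x : ℝ} (hx0 : 0 ≤ x) (hx1 : x < 1) :
    ∑' k : ℕ, Real.Gamma (ζ + k) * (-x) ^ k / (k.factorial : ℝ)
      = Real.Gamma ζ * (1 + x) ^ (-ζ) := by
  set F : ℕ → ℝ → ℝ := fun k u =>
    ((-x) ^ k / (k.factorial : ℝ)) * (Real.exp (-u) * u ^ (ζ + k - 1)) with hF
  have hζk : ∀ k : ℕ, (0:ℝ) < ζ + k := fun k => by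
    have : (0:ℝ) ≤ k := Nat.cast_nonneg k; linarith
  have hInt : ∀ k : ℕ, Integrable (F k) (volume.restrict (Ioi 0)) := fun k =>
    (Real.GammaIntegral_convergent (hζk k)).const_mul _
  have hval : ∀ k : ℕ, ∫ u in Ioi 0, F k u
      = ((-x) ^ k / (k.factorial : ℝ)) * Real.Gamma (ζ + k) := by
    intro k
    rw [hF]
    simp only
    rw [integral_const_mul, ← Real.Gamma_eq_integral (hζk k)]
  have hnorm : ∀ k : ℕ, ∫ u in Ioi 0, ‖F k u‖
      = (x ^ k / (k.factorial : ℝ)) * Real.Gamma (ζ + k) := by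
    intro k
    rw [show ∫ u in Ioi 0, ‖F k u‖
        = ∫ u in Ioi 0, (x ^ k / (k.factorial : ℝ)) * (Real.exp (-u) * u ^ (ζ + k - 1)) from
      setIntegral_congr_fun measurableSet_Ioi (fun u hu => ?_)]
    · rw [integral_const_mul, ← Real.Gamma_eq_integral (hζk k)]
    · have hu' : (0:ℝ) < u := hu
      have h1 : (0:ℝ) < Real.exp (-u) * u ^ (ζ + k - 1) := by positivity
      rw [hF]
      simp only
      rw [norm_mul, Real.norm_eq_abs, Real.norm_eq_abs, abs_of_pos h1, abs_div, abs_pow,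
        abs_neg, abs_of_nonneg hx0, Nat.abs_cast]
  have hSum : Summable fun k : ℕ => ∫ u in Ioi 0, ‖F k u‖ := by
    refine Summable.congr ((aux_summable ζ hζ hx0 hx1)) (fun k => ?_)
    rw [hnorm k]; ring
  have hswap := integral_tsum_of_summable_integral_norm hInt hSum
  have hpt : ∀ u ∈ Ioi (0:ℝ), ∑' k : ℕ, F k u = u ^ (ζ - 1) * Real.exp (-((1 + x) * u)) := by
    intro u hu
    have hu' : (0:ℝ) < u := hu
    have hterm : ∀ k : ℕ, F k u
        = (Real.exp (-u) * u ^ (ζ - 1)) * ((-(x * u)) ^ k / (k.factorial : ℝ)) := by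
      intro k
      rw [hF]
      simp only
      rw [show ζ + (k:ℝ) - 1 = (ζ - 1) + (k:ℝ) by ring, Real.rpow_add hu',
        Real.rpow_natCast, show -(x * u) = (-x) * u by ring, mul_pow]
      ring
    rw [tsum_congr hterm, tsum_mul_left, aux_exp_tsum (-(x * u)),
      show Real.exp (-u) * u ^ (ζ - 1) * Real.exp (-(x * u))
        = u ^ (ζ - 1) * (Real.exp (-u) * Real.exp (-(x * u))) by ring, ← Real.exp_add]
    congr 1
    ring
  rw [show (∑' k : ℕ, Real.Gamma (ζ + k) * (-x) ^ k / (k.factorial : ℝ))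
      = ∑' k : ℕ, ∫ u in Ioi 0, F k u from tsum_congr fun k => by rw [hval k]; ring,
    hswap, setIntegral_congr_fun measurableSet_Ioi hpt,
    integral_rpow_mul_exp_neg_mul_Ioi hζ (by linarith : (0:ℝ) < 1 + x),
    one_div, Real.inv_rpow (by linarith), ← Real.rpow_neg (by linarith)]
  ring

/-- Laplace transform of `t^{b-1} E_{a,b}^ζ(-μ t^a)`:
`∫_0^∞ e^{-st} t^{b-1} E_{a,b}^ζ(-μ t^a) dt = s^{aζ-b} / (s^a + μ)^ζ`
for `s > (2μ)^{1/a}`, assuming absolute convergence of the integral. -/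
theorem prabhakar_laplace
    (a b ζ μ : ℝ) (ha : 0 < a) (hb : 0 < b) (hζ : 0 < ζ) (hμ : 0 ≤ μ)
    (E : ℝ → ℝ)
    (hE : ∀ x : ℝ, E x = ∑' k : ℕ, (Real.Gamma (ζ + k) / Real.Gamma ζ) *
        (-(μ * x ^ a)) ^ k / ((k.factorial : ℝ) * Real.Gamma (a * k + b)))
    (s : ℝ) (hs : (2 * μ) ^ (1 / a) < s)
    (hint : MeasureTheory.IntegrableOn
      (fun t : ℝ => Real.exp (-(s * t)) * t ^ (b - 1) * E t) (Set.Ioi 0)) :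
    ∫ t in Set.Ioi (0 : ℝ), Real.exp (-(s * t)) * t ^ (b - 1) * E t
      = s ^ (a * ζ - b) / (s ^ a + μ) ^ ζ := by
  have hΓζ : 0 < Real.Gamma ζ := Real.Gamma_pos_of_pos hζ
  have hspos : 0 < s := lt_of_le_of_lt (Real.rpow_nonneg (by linarith) _) hs
  have hsa : 0 < s ^ a := Real.rpow_pos_of_pos hspos a
  have h2μ : 2 * μ < s ^ a := by
    have h := Real.rpow_lt_rpow (Real.rpow_nonneg (by linarith) _) hs ha
    rwa [← Real.rpow_mul (by linarith), one_div, inv_mul_cancel₀ ha.ne', Real.rpow_one] at h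
  set x : ℝ := μ / s ^ a with hxdef
  have hx0 : 0 ≤ x := div_nonneg hμ hsa.le
  have hx1 : x < 1 := (div_lt_one hsa).mpr (by linarith)
  have hζk : ∀ k : ℕ, (0:ℝ) < ζ + k := fun k => by
    have : (0:ℝ) ≤ k := Nat.cast_nonneg k; linarith
  have hakb : ∀ k : ℕ, (0:ℝ) < a * k + b := fun k => by
    have h1 : (0:ℝ) ≤ k := Nat.cast_nonneg k
    nlinarith
  set F : ℕ → ℝ → ℝ := fun k t =>
    (Real.Gamma (ζ + k) / Real.Gamma ζ / ((k.factorial : ℝ) * Real.Gamma (a * k + b))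
      * (-μ) ^ k) * (t ^ (a * k + b - 1) * Real.exp (-(s * t))) with hF
  have hCpos : ∀ k : ℕ, 0 < Real.Gamma (ζ + k) / Real.Gamma ζ
      / ((k.factorial : ℝ) * Real.Gamma (a * k + b)) := fun k => by
    have h1 := aux_gamma_pos ζ hζ k
    have h2 := Real.Gamma_pos_of_pos (hakb k)
    have h3 : (0:ℝ) < (k.factorial : ℝ) := Nat.cast_pos.mpr (Nat.factorial_pos k)
    positivity
  have hInt : ∀ k : ℕ, Integrable (F k) (volume.restrict (Ioi 0)) := fun k =>
    (aux_integrableOn (a * k + b) s (hakb k) hspos).const_mul _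
  -- value of each integral
  have hval : ∀ k : ℕ, ∫ t in Ioi 0, F k t
      = (s ^ (-b) / Real.Gamma ζ) * (Real.Gamma (ζ + k) * (-x) ^ k / (k.factorial : ℝ)) := by
    intro k
    rw [hF]
    simp only
    rw [integral_const_mul, integral_rpow_mul_exp_neg_mul_Ioi (hakb k) hspos]
    have h2 := (Real.Gamma_pos_of_pos (hakb k)).ne'
    have h3 : ((k.factorial : ℝ)) ≠ 0 := (Nat.cast_pos.mpr (Nat.factorial_pos k)).ne'
    have e1 : ((1:ℝ) / s) ^ (a * (k:ℝ) + b) = s ^ (-b) * ((s ^ a)⁻¹) ^ k := by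
      rw [← Real.rpow_natCast ((s ^ a)⁻¹) k, ← Real.rpow_neg_one (s ^ a),
        ← Real.rpow_mul hspos.le a (-1), ← Real.rpow_mul hspos.le (a * -1) k,
        ← Real.rpow_add hspos, one_div, ← Real.rpow_neg_one s,
        ← Real.rpow_mul hspos.le (-1) (a * k + b)]
      congr 1
      ring
    have e2 : (-μ) ^ k * ((s ^ a)⁻¹) ^ k = (-x) ^ k := by
      rw [← mul_pow, hxdef]
      congr 1
      ring
    rw [e1, ← e2]
    field_simp
  have hnormval : ∀ k : ℕ, ∫ t in Ioi 0, ‖F k t‖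
      = (s ^ (-b) / Real.Gamma ζ) * (Real.Gamma (ζ + k) * x ^ k / (k.factorial : ℝ)) := by
    intro k
    have h2 := (Real.Gamma_pos_of_pos (hakb k)).ne'
    have h3 : ((k.factorial : ℝ)) ≠ 0 := (Nat.cast_pos.mpr (Nat.factorial_pos k)).ne'
    rw [show (∫ t in Ioi 0, ‖F k t‖)
        = ∫ t in Ioi 0, (Real.Gamma (ζ + k) / Real.Gamma ζ
            / ((k.factorial : ℝ) * Real.Gamma (a * k + b)) * μ ^ k)
          * (t ^ (a * k + b - 1) * Real.exp (-(s * t))) from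
      setIntegral_congr_fun measurableSet_Ioi (fun t ht => ?_)]
    · rw [integral_const_mul, integral_rpow_mul_exp_neg_mul_Ioi (hakb k) hspos]
      have e1 : ((1:ℝ) / s) ^ (a * (k:ℝ) + b) = s ^ (-b) * ((s ^ a)⁻¹) ^ k := by
        rw [← Real.rpow_natCast ((s ^ a)⁻¹) k, ← Real.rpow_neg_one (s ^ a),
          ← Real.rpow_mul hspos.le a (-1), ← Real.rpow_mul hspos.le (a * -1) k,
          ← Real.rpow_add hspos, one_div, ← Real.rpow_neg_one s,
          ← Real.rpow_mul hspos.le (-1) (a * k + b)]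
        congr 1
        ring
      have e2 : μ ^ k * ((s ^ a)⁻¹) ^ k = x ^ k := by
        rw [← mul_pow, hxdef, div_eq_mul_inv]
      rw [e1, ← e2]
      field_simp
    · have ht' : (0:ℝ) < t := ht
      have hpos : (0:ℝ) < t ^ (a * k + b - 1) * Real.exp (-(s * t)) := by positivity
      rw [hF]
      simp only
      rw [norm_mul, Real.norm_eq_abs, Real.norm_eq_abs, abs_of_pos hpos, abs_mul,
        abs_of_pos (hCpos k), abs_pow, abs_neg, abs_of_nonneg hμ]
  have hSum : Summable fun k : ℕ => ∫ t in Ioi 0, ‖F k t‖ := by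
    refine Summable.congr ((aux_summable ζ hζ hx0 hx1).mul_left
      (s ^ (-b) / Real.Gamma ζ)) fun k => (hnormval k).symm
  have hswap := integral_tsum_of_summable_integral_norm hInt hSum
  have hpt : ∀ t ∈ Ioi (0:ℝ),
      Real.exp (-(s * t)) * t ^ (b - 1) * E t = ∑' k : ℕ, F k t := by
    intro t ht
    have ht' : (0:ℝ) < t := ht
    rw [hE t, ← tsum_mul_left]
    refine tsum_congr fun k => ?_
    rw [hF]
    simp only
    rw [show -(μ * t ^ a) = (-μ) * t ^ a by ring, mul_pow,
      ← Real.rpow_natCast (t ^ a) k, ← Real.rpow_mul ht'.le a k,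
      show a * (k:ℝ) + b - 1 = (b - 1) + a * (k:ℝ) by ring,
      Real.rpow_add ht' (b - 1) (a * k)]
    ring
  have h1x : 1 + x = (s ^ a + μ) / s ^ a := by
    rw [hxdef]
    field_simp
  have hq : (0:ℝ) < s ^ a + μ := by linarith
  calc ∫ t in Set.Ioi (0 : ℝ), Real.exp (-(s * t)) * t ^ (b - 1) * E t
      = ∫ t in Set.Ioi (0 : ℝ), ∑' k : ℕ, F k t :=
        setIntegral_congr_fun measurableSet_Ioi hpt
    _ = ∑' k : ℕ, ∫ t in Ioi 0, F k t := hswap.symm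
    _ = ∑' k : ℕ, (s ^ (-b) / Real.Gamma ζ)
          * (Real.Gamma (ζ + k) * (-x) ^ k / (k.factorial : ℝ)) := tsum_congr hval
    _ = (s ^ (-b) / Real.Gamma ζ)
          * ∑' k : ℕ, Real.Gamma (ζ + k) * (-x) ^ k / (k.factorial : ℝ) := tsum_mul_left
    _ = (s ^ (-b) / Real.Gamma ζ) * (Real.Gamma ζ * (1 + x) ^ (-ζ)) := by
          rw [aux_binomial ζ hζ hx0 hx1]
    _ = s ^ (a * ζ - b) / (s ^ a + μ) ^ ζ := by
          rw [h1x, Real.div_rpow hq.le hsa.le, ← Real.rpow_mul hspos.le a (-ζ),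
            show a * -ζ = -(a * ζ) by ring, Real.rpow_neg hspos.le (a * ζ),
            Real.rpow_neg hq.le ζ,
            show a * ζ - b = a * ζ + -b by ring, Real.rpow_add hspos]
          have hz1 : Real.Gamma ζ ≠ 0 := hΓζ.ne'
          have hz2 : (s ^ a + μ) ^ ζ ≠ 0 := (Real.rpow_pos_of_pos hq ζ).ne'
          have hz3 : s ^ (a * ζ) ≠ 0 := (Real.rpow_pos_of_pos hspos _).ne'
          field_simp
          try ring
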